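/- Let K be a subfield of F and assume that η_j ∉ K for every j = 1,…,ℓ. Then the set of polynomials in P_{k,n}[t,h,η] all of whose coefficients lie in K equals span_K{ X^i : i ∈ I }, where I = {0,1,…,k−1} ∖ {h_1,…,h_ℓ}. -/
import Mathlib


open Polynomial

/-- Evaluation vector: `ev_α(f) = (f(α₁),…,f(α_n))`. -/
noncomputable def evalVec {F : Type*} [Field F] {n : ℕ} (α : Fin n → F) (f : F[X]) :
    Fin n → F :=
  fun i => f.eval (α i)

/-- The twisted polynomial with coefficient vector `u`:
`Σ_{i=0}^{k−1} u_i X^i + Σ_{j=1}^{ℓ} η_j u_{h_j} X^{k−1+t_j}`. -/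
noncomputable def twistedPoly {F : Type*} [Field F] (k ℓ : ℕ) (t : Fin ℓ → ℕ)
    (h : Fin ℓ → Fin k) (η : Fin ℓ → F) (u : Fin k → F) : F[X] :=
  (∑ i : Fin k, Polynomial.C (u i) * Polynomial.X ^ (i : ℕ))
    + ∑ j : Fin ℓ, Polynomial.C (η j * u (h j)) * Polynomial.X ^ (k - 1 + t j)

/-- The space of twisted polynomials `P_{k,n}[t,h,η]`. -/
def twistedPolySet (F : Type*) [Field F] (k ℓ : ℕ) (t : Fin ℓ → ℕ)
    (h : Fin ℓ → Fin k) (η : Fin ℓ → F) : Set F[X] :=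
  { p | ∃ u : Fin k → F, p = twistedPoly k ℓ t h η u }

/-- The twisted Reed–Solomon code `TRS_{k,n}[α,t,h,η]`, as a subset of `F^n`. -/
def TRS {F : Type*} [Field F] {n : ℕ} (α : Fin n → F) (k ℓ : ℕ) (t : Fin ℓ → ℕ)
    (h : Fin ℓ → Fin k) (η : Fin ℓ → F) : Set (Fin n → F) :=
  { c | ∃ u : Fin k → F, c = evalVec α (twistedPoly k ℓ t h η u) }

/-- The Reed–Solomon code `RS_{k,n}[α]`, as a subset of `F^n`. -/
def RS {F : Type*} [Field F] {n : ℕ} (α : Fin n → F) (k : ℕ) : Set (Fin n → F) :=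
  { c | ∃ f : F[X], f.degree ≤ ((k - 1 : ℕ) : WithBot ℕ) ∧ c = evalVec α f }

lemma coeff_fst_lt {F : Type*} [Field F] {k : ℕ} (u : Fin k → F) (m : ℕ) (hm : m < k) :
    (∑ i : Fin k, Polynomial.C (u i) * Polynomial.X ^ (i : ℕ)).coeff m = u ⟨m, hm⟩ := by
  rw [Polynomial.finset_sum_coeff, Finset.sum_eq_single (⟨m, hm⟩ : Fin k)]
  · simp
  · intro b _ hb
    simp only [Polynomial.coeff_C_mul, Polynomial.coeff_X_pow]
    rw [if_neg, mul_zero]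
    intro hmb
    exact hb (Fin.ext hmb.symm)
  · simp

lemma coeff_fst_ge {F : Type*} [Field F] {k : ℕ} (u : Fin k → F) (m : ℕ) (hm : k ≤ m) :
    (∑ i : Fin k, Polynomial.C (u i) * Polynomial.X ^ (i : ℕ)).coeff m = 0 := by
  rw [Polynomial.finset_sum_coeff]
  apply Finset.sum_eq_zero
  intro i _
  simp only [Polynomial.coeff_C_mul, Polynomial.coeff_X_pow]
  rw [if_neg, mul_zero]
  omega

lemma coeff_snd_lt {F : Type*} [Field F] {k ℓ : ℕ} (t : Fin ℓ → ℕ) (ht : ∀ j, 1 ≤ t j)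
    (c : Fin ℓ → F) (m : ℕ) (hm : m < k) :
    (∑ j : Fin ℓ, Polynomial.C (c j) * Polynomial.X ^ (k - 1 + t j)).coeff m = 0 := by
  rw [Polynomial.finset_sum_coeff]
  apply Finset.sum_eq_zero
  intro j _
  simp only [Polynomial.coeff_C_mul, Polynomial.coeff_X_pow]
  rw [if_neg, mul_zero]
  have := ht j; omega

lemma coeff_snd_at {F : Type*} [Field F] {k ℓ : ℕ} (t : Fin ℓ → ℕ)
    (htinj : Function.Injective t) (c : Fin ℓ → F) (j : Fin ℓ) :
    (∑ j' : Fin ℓ, Polynomial.C (c j') * Polynomial.X ^ (k - 1 + t j')).coeff (k - 1 + t j)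
      = c j := by
  rw [Polynomial.finset_sum_coeff, Finset.sum_eq_single j]
  · simp
  · intro b _ hb
    simp only [Polynomial.coeff_C_mul, Polynomial.coeff_X_pow]
    rw [if_neg, mul_zero]
    intro hmb
    exact hb (htinj (by omega))
  · simp

lemma subfield_smul_poly {F : Type*} [Field F] (K : Subfield F) (c : K) (q : F[X]) (m : ℕ) :
    (c • q).coeff m = (c : F) * q.coeff m := by
  rw [Polynomial.coeff_smul]
  rfl

/-- if η_j ∉ K for all j, then the set of polynomials in P_{k,n}[t,h,η]
all of whose coefficients lie in K equals span_K{ X^i : i ∈ I },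
where I = {0,…,k−1} ∖ {h_1,…,h_ℓ}. -/
theorem twistedPolySet_coeffs_in_subfield_eq_span
    {F : Type*} [Field F] {n k ℓ : ℕ}
    (hk : 1 ≤ k) (hkn : k ≤ n) (hℓ : 1 ≤ ℓ)
    (t : Fin ℓ → ℕ) (htinj : Function.Injective t)
    (htr : ∀ j, 1 ≤ t j ∧ t j ≤ n - k)
    (h : Fin ℓ → Fin k) (hhinj : Function.Injective h)
    (η : Fin ℓ → F) (hη : ∀ j, η j ≠ 0)
    (K : Subfield F) (hηK : ∀ j, η j ∉ K) :
    { p ∈ twistedPolySet F k ℓ t h η | ∀ m, p.coeff m ∈ K }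
      = (Submodule.span K { q : F[X] |
          ∃ i ∈ Finset.range k \ Finset.image (fun j => ((h j : ℕ))) Finset.univ,
            q = Polynomial.X ^ i } : Submodule K F[X]) := by
  set S : Finset ℕ := Finset.range k \ Finset.image (fun j => ((h j : ℕ))) Finset.univ with hS
  have ht1 : ∀ j, 1 ≤ t j := fun j => (htr j).1
  ext p
  simp only [Set.mem_setOf_eq, SetLike.mem_coe]
  constructor
  · rintro ⟨⟨u, rfl⟩, hKc⟩
    -- every coefficient u i is in K
    have huK : ∀ i : Fin k, u i ∈ K := by
      intro i
      have := hKc (i : ℕ)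
      rwa [twistedPoly, Polynomial.coeff_add, coeff_fst_lt u _ i.isLt,
        coeff_snd_lt t ht1 _ _ i.isLt, add_zero] at this
    -- u (h j) = 0 for all j
    have hu0 : ∀ j, u (h j) = 0 := by
      intro j
      by_contra hne
      have h1 : η j * u (h j) ∈ K := by
        have := hKc (k - 1 + t j)
        rwa [twistedPoly, Polynomial.coeff_add,
          coeff_fst_ge u _ (by have := ht1 j; omega),
          coeff_snd_at t htinj _ j, zero_add] at this
      have h2 : (u (h j))⁻¹ ∈ K := K.inv_mem (huK (h j))
      have h3 : η j ∈ K := by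
        have := K.mul_mem h1 h2
        rwa [mul_assoc, mul_inv_cancel₀ hne, mul_one] at this
      exact hηK j h3
    -- the twisted part vanishes
    have hp : twistedPoly k ℓ t h η u = ∑ i : Fin k, Polynomial.C (u i) * Polynomial.X ^ (i : ℕ) := by
      rw [twistedPoly]
      have : ∑ j : Fin ℓ, Polynomial.C (η j * u (h j)) * Polynomial.X ^ (k - 1 + t j) = 0 := by
        apply Finset.sum_eq_zero
        intro j _
        rw [hu0 j, mul_zero, Polynomial.C_0, zero_mul]
      rw [this, add_zero]
    rw [hp]
    apply Submodule.sum_mem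
    intro i _
    by_cases hi : (i : ℕ) ∈ Finset.image (fun j => ((h j : ℕ))) Finset.univ
    · obtain ⟨j, _, hji⟩ := Finset.mem_image.mp hi
      have : u i = 0 := by
        have : h j = i := Fin.ext hji
        rw [← this]; exact hu0 j
      rw [this, Polynomial.C_0, zero_mul]
      exact Submodule.zero_mem _
    · have hgen : (Polynomial.X ^ (i : ℕ) : F[X]) ∈
          { q : F[X] | ∃ i ∈ S, q = Polynomial.X ^ i } :=
        ⟨(i : ℕ), Finset.mem_sdiff.mpr ⟨Finset.mem_range.mpr i.isLt, hi⟩, rfl⟩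
      have hspan := Submodule.subset_span (R := K) hgen
      have : Polynomial.C (u i) * Polynomial.X ^ (i : ℕ)
          = (⟨u i, huK i⟩ : K) • (Polynomial.X ^ (i : ℕ) : F[X]) := by
        ext m
        rw [subfield_smul_poly, Polynomial.coeff_C_mul]
      rw [this]
      exact Submodule.smul_mem _ _ hspan
  · intro hp
    -- characterize span membership
    have key : (∀ m, p.coeff m ∈ K) ∧ (∀ m, m ∉ S → p.coeff m = 0) := by
      induction hp using Submodule.span_induction with
      | mem x hx =>
        obtain ⟨i, hiS, rfl⟩ := hx
        constructor
        · intro m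
          rw [Polynomial.coeff_X_pow]
          split
          · exact K.one_mem
          · exact K.zero_mem
        · intro m hm
          rw [Polynomial.coeff_X_pow, if_neg]
          rintro rfl
          exact hm hiS
      | zero =>
        exact ⟨fun m => by rw [Polynomial.coeff_zero]; exact K.zero_mem,
          fun m _ => Polynomial.coeff_zero m⟩
      | add x y hx hy ihx ihy =>
        refine ⟨fun m => ?_, fun m hm => ?_⟩
        · rw [Polynomial.coeff_add]; exact K.add_mem (ihx.1 m) (ihy.1 m)
        · rw [Polynomial.coeff_add, ihx.2 m hm, ihy.2 m hm, add_zero]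
      | smul c x hx ihx =>
        refine ⟨fun m => ?_, fun m hm => ?_⟩
        · rw [subfield_smul_poly]; exact K.mul_mem c.2 (ihx.1 m)
        · rw [subfield_smul_poly, ihx.2 m hm, mul_zero]
    obtain ⟨hcoeK, hsupp⟩ := key
    refine ⟨⟨fun i => p.coeff i, ?_⟩, hcoeK⟩
    have hu0 : ∀ j, p.coeff ((h j : ℕ)) = 0 := by
      intro j
      apply hsupp
      rw [hS, Finset.mem_sdiff]
      push_neg
      intro _
      exact Finset.mem_image.mpr ⟨j, Finset.mem_univ j, rfl⟩
    rw [twistedPoly]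
    have hzero : ∑ j : Fin ℓ, Polynomial.C (η j * p.coeff ((h j : ℕ)))
        * Polynomial.X ^ (k - 1 + t j) = 0 := by
      apply Finset.sum_eq_zero
      intro j _
      rw [hu0 j, mul_zero, Polynomial.C_0, zero_mul]
    rw [hzero, add_zero]
    ext m
    by_cases hm : m < k
    · rw [coeff_fst_lt _ _ hm]
    · rw [coeff_fst_ge _ _ (not_lt.mp hm)]
      apply hsupp
      rw [hS, Finset.mem_sdiff]
      push_neg
      intro hmem
      exact absurd (Finset.mem_range.mp hmem) hm
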